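/- arXiv:2004.13222 — 3 statements merged into one kernel-verified Lean document; each statement's English description precedes it below -/
import Mathlib

section
/- Let h : ℝ → M_n(ℂ) be a C¹ family of Hermitian matrices with nondegenerate C¹ eigenvalues εᵐ(k) and spectral projections Pᵐ(k), and let f : ℝ → ℝ be C¹. Then for m ≠ l, Tr[Pᵐ(k) ∂(f(h(k))) Pˡ(k) ∂h(k)] = f(εˡ(k))(εˡ(k) - εᵐ(k)) Tr[Pᵐ(∂Pˡ)²] + f(εᵐ(k))(εᵐ(k) - εˡ(k)) Tr[Pˡ(∂Pᵐ)²]. -/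
open Matrix

/-- Off-diagonal part of the trace identity: for a `C¹` family of Hermitian matrices
`h(k) = Σ_j εʲ(k) Pʲ(k)` with nondegenerate `C¹` eigenvalues and spectral projections,
`f` of class `C¹`, and `m ≠ l`,
`Tr[Pᵐ ∂(f(h)) Pˡ ∂h] = f(εˡ)(εˡ-εᵐ)Tr[Pᵐ(∂Pˡ)²] + f(εᵐ)(εᵐ-εˡ)Tr[Pˡ(∂Pᵐ)²]`. -/
theorem stmt9 {n : ℕ} (h h' : ℝ → Matrix (Fin n) (Fin n) ℂ)
    (ε ε' : Fin n → ℝ → ℝ) (P P' : Fin n → ℝ → Matrix (Fin n) (Fin n) ℂ)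
    (f f' : ℝ → ℝ) (Fh' : ℝ → Matrix (Fin n) (Fin n) ℂ)
    (hherm : ∀ k, (h k).IsHermitian)
    (hspec : ∀ k, h k = ∑ m, (ε m k : ℂ) • P m k)
    (hproj : ∀ (k : ℝ) (m l : Fin n), P m k * P l k = if m = l then P m k else 0)
    (hadj : ∀ (k : ℝ) (m : Fin n), (P m k)ᴴ = P m k)
    (hsumP : ∀ k : ℝ, ∑ m, P m k = 1)
    (hnd : ∀ (k : ℝ) (m l : Fin n), m ≠ l → ε m k ≠ ε l k)
    (hε : ∀ (m : Fin n) (k : ℝ), HasDerivAt (ε m) (ε' m k) k)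
    (hPd : ∀ (m : Fin n) (k : ℝ) (i j : Fin n),
      HasDerivAt (fun k => P m k i j) (P' m k i j) k)
    (hhd : ∀ (k : ℝ) (i j : Fin n), HasDerivAt (fun k => h k i j) (h' k i j) k)
    (hf : ∀ x : ℝ, HasDerivAt f (f' x) x)
    (hFh : ∀ (k : ℝ) (i j : Fin n),
      HasDerivAt (fun k => (∑ m, (f (ε m k) : ℂ) • P m k) i j) (Fh' k i j) k)
    (k : ℝ) (m l : Fin n) (hml : m ≠ l) :
    (P m k * Fh' k * P l k * h' k).trace
      = (f (ε l k) : ℂ) * ((ε l k : ℂ) - (ε m k : ℂ)) * (P m k * (P' l k * P' l k)).trace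
        + (f (ε m k) : ℂ) * ((ε m k : ℂ) - (ε l k : ℂ)) * (P l k * (P' m k * P' m k)).trace := by
  have hPP : ∀ a b : Fin n, P a k * P b k = if a = b then P a k else 0 := hproj k
  -- differentiate the projection relations
  have hD : ∀ a b : Fin n,
      P' a k * P b k + P a k * P' b k = if a = b then P' a k else 0 := by
    intro a b
    ext i j
    have h1 : HasDerivAt (fun t => (P a t * P b t) i j)
        ((P' a k * P b k + P a k * P' b k) i j) k := by
      have := HasDerivAt.fun_sum (fun x (_ : x ∈ (Finset.univ : Finset (Fin n))) =>
        (hPd a k i x).mul (hPd b k x j))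
      simpa [Matrix.mul_apply, Matrix.add_apply, Finset.sum_add_distrib] using this
    have h2 : HasDerivAt (fun t => (P a t * P b t) i j)
        ((if a = b then P' a k else 0) i j) k := by
      have hfun : (fun t => (P a t * P b t) i j)
          = (fun t => (if a = b then P a t else 0) i j) := by
        funext t; rw [hproj]
      rw [hfun]
      by_cases hab : a = b
      · simpa [hab] using hPd b k i j
      · simpa [hab] using hasDerivAt_const k (0 : ℂ)
    exact h1.unique h2
  have hneg : ∀ a b : Fin n, a ≠ b → P a k * P' b k = -(P' a k * P b k) := by
    intro a b hab
    have h0 := hD a b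
    rw [if_neg hab] at h0
    rw [eq_neg_iff_add_eq_zero, add_comm]
    exact h0
  have hid : ∀ a : Fin n, P a k * P' a k = P' a k - P' a k * P a k := by
    intro a
    have h0 := hD a a
    rw [if_pos rfl] at h0
    exact eq_sub_of_add_eq' h0
  -- derivative of h
  have hh'eq : h' k = ∑ a, ((ε' a k : ℂ) • P a k + (ε a k : ℂ) • P' a k) := by
    ext i j
    have h1 : HasDerivAt (fun t => (∑ a, (ε a t : ℂ) • P a t) i j)
        ((∑ a, ((ε' a k : ℂ) • P a k + (ε a k : ℂ) • P' a k)) i j) k := by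
      have := HasDerivAt.fun_sum (fun a (_ : a ∈ (Finset.univ : Finset (Fin n))) =>
        ((hε a k).ofReal_comp.mul (hPd a k i j)))
      simpa [Matrix.sum_apply, Matrix.smul_apply, Matrix.add_apply, smul_eq_mul] using this
    have h2 : HasDerivAt (fun t => (∑ a, (ε a t : ℂ) • P a t) i j) (h' k i j) k := by
      have hfun : (fun t => h t i j) = fun t => (∑ a, (ε a t : ℂ) • P a t) i j := by
        funext t; rw [hspec]
      rw [← hfun]; exact hhd k i j
    exact h2.unique h1
  -- derivative of f(h)
  have hFh'eq : Fh' k = ∑ a, (((f' (ε a k) * ε' a k : ℝ) : ℂ) • P a k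
      + ((f (ε a k) : ℝ) : ℂ) • P' a k) := by
    ext i j
    have h1 : HasDerivAt (fun t => (∑ a, (f (ε a t) : ℂ) • P a t) i j)
        ((∑ a, (((f' (ε a k) * ε' a k : ℝ) : ℂ) • P a k
          + ((f (ε a k) : ℝ) : ℂ) • P' a k)) i j) k := by
      have := HasDerivAt.fun_sum (fun a (_ : a ∈ (Finset.univ : Finset (Fin n))) =>
        (((hf (ε a k)).comp k (hε a k)).ofReal_comp.mul (hPd a k i j)))
      simpa [Matrix.sum_apply, Matrix.smul_apply, Matrix.add_apply, smul_eq_mul,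
        Function.comp] using this
    exact (hFh k i j).unique h1
  -- basic trace identities
  have t1 : (P m k * P' l k).trace = 0 := by
    have e : P m k * P' l k = -(P m k * P' m k * P l k) := by
      calc P m k * P' l k = (P m k * P m k) * P' l k := by rw [hPP]; simp
        _ = P m k * (P m k * P' l k) := by rw [mul_assoc]
        _ = P m k * (-(P' m k * P l k)) := by rw [hneg m l hml]
        _ = -(P m k * P' m k * P l k) := by rw [mul_neg, mul_assoc]
    rw [e, trace_neg, Matrix.trace_mul_cycle, hPP,
      if_neg (Ne.symm hml)]
    simp
  have t2 : ∀ j : Fin n, (P m k * P' l k * P j k).trace = 0 := by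
    intro j
    rw [Matrix.trace_mul_cycle, hPP]
    by_cases hj : j = m
    · simpa [hj] using t1
    · simp [hj]
  have half : ∀ a b : Fin n, a ≠ b →
      (2 : ℂ) * (P a k * (P' b k * P' b k)).trace = -(P' a k * P' b k).trace := by
    intro a b hab
    have e1 : P a k * (P' b k * P' b k)
        = -(P' a k * P' b k) + P' a k * P' b k * P b k := by
      calc P a k * (P' b k * P' b k) = (P a k * P' b k) * P' b k := by rw [mul_assoc]
        _ = (-(P' a k * P b k)) * P' b k := by rw [hneg a b hab]
        _ = -(P' a k * (P b k * P' b k)) := by rw [neg_mul, mul_assoc]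
        _ = -(P' a k * (P' b k - P' b k * P b k)) := by rw [hid b]
        _ = -(P' a k * P' b k) + P' a k * P' b k * P b k := by
            rw [mul_sub, ← mul_assoc]; abel
    have e2 : (P' a k * P' b k * P b k).trace = -(P a k * (P' b k * P' b k)).trace := by
      rw [Matrix.trace_mul_cycle]
      rw [hneg b a (Ne.symm hab), neg_mul, trace_neg, Matrix.trace_mul_cycle,
        Matrix.trace_mul_cycle, mul_assoc]
    have e3 := congrArg Matrix.trace e1
    rw [trace_add, trace_neg, e2] at e3
    linear_combination e3
  have hTS : (P m k * (P' l k * P' l k)).trace = (P l k * (P' m k * P' m k)).trace := by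
    have h1 := half m l hml
    have h2 := half l m (Ne.symm hml)
    rw [Matrix.trace_mul_comm (P' l k) (P' m k)] at h2
    linear_combination (h1 - h2) / 2
  have tF2 : (P m k * P' l k * P' m k).trace = -(P l k * (P' m k * P' m k)).trace := by
    rw [hneg m l hml, neg_mul, trace_neg, Matrix.trace_mul_cycle,
      Matrix.trace_mul_cycle, mul_assoc]
  have tF3 : ∀ j : Fin n, j ≠ m → j ≠ l → (P m k * P' l k * P' j k).trace = 0 := by
    intro j hjm hjl
    have e : (P m k * P' l k * P' j k).trace = -(P m k * P' l k * P' j k).trace := by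
      conv_lhs =>
        rw [hneg m l hml, neg_mul, mul_assoc, hneg l j (Ne.symm hjl), mul_neg, neg_neg,
          ← mul_assoc]
      rw [Matrix.trace_mul_cycle, hneg j m hjm, neg_mul, trace_neg,
        Matrix.trace_mul_cycle, Matrix.trace_mul_cycle]
    linear_combination e / 2
  -- reduce P m * Fh' * P l
  have hA : P m k * Fh' k * P l k
      = (((f (ε l k) : ℝ) : ℂ) - ((f (ε m k) : ℝ) : ℂ)) • (P m k * P' l k) := by
    rw [hFh'eq, Finset.mul_sum, Finset.sum_mul]
    have key : ∀ a : Fin n, P m k * (((f' (ε a k) * ε' a k : ℝ) : ℂ) • P a k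
          + ((f (ε a k) : ℝ) : ℂ) • P' a k) * P l k
        = (if a = l then ((f (ε l k) : ℝ) : ℂ) • (P m k * P' l k) else 0)
          + (if a = m then -(((f (ε m k) : ℝ) : ℂ) • (P m k * P' l k)) else 0) := by
      intro a
      have h1 : P m k * P a k * P l k = 0 := by
        rw [hPP]
        split_ifs with hma
        · rw [hPP, if_neg hml]
        · rw [zero_mul]
      have h3 : P' a k * P l k = (if a = l then P' a k else 0) - P a k * P' l k :=
        eq_sub_of_add_eq (hD a l)
      have h2 : P m k * P' a k * P l k
          = (if a = l then P m k * P' l k else 0) - (if a = m then P m k * P' l k else 0) := by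
        rw [mul_assoc, h3, mul_sub, ← mul_assoc, hPP]
        by_cases hal : a = l
        · subst hal
          by_cases ham : a = m
          · exact absurd ham.symm hml
          · have hma : ¬ (m = a) := fun hh => ham hh.symm
            simp [ham, hma]
        · by_cases ham : a = m
          · subst ham
            simp [hal]
          · have hma : ¬ (m = a) := fun hh => ham hh.symm
            simp [hal, ham, hma]
      rw [mul_add, add_mul, mul_smul_comm, mul_smul_comm, smul_mul_assoc, smul_mul_assoc,
        h1, h2, smul_zero, zero_add, smul_sub]
      by_cases hal : a = l
      · subst hal
        by_cases ham : a = m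
        · exact absurd ham.symm hml
        · simp [ham]
      · by_cases ham : a = m
        · subst ham
          simp [hal]
        · simp [hal, ham]
    rw [Finset.sum_congr rfl (fun a _ => key a), Finset.sum_add_distrib,
      Finset.sum_ite_eq' Finset.univ, Finset.sum_ite_eq' Finset.univ]
    simp only [Finset.mem_univ, if_true]
    rw [sub_smul]
    abel
  -- trace of P m * P' l * h'
  have hTr : (P m k * P' l k * h' k).trace
      = (ε l k : ℂ) * (P m k * (P' l k * P' l k)).trace
        - (ε m k : ℂ) * (P l k * (P' m k * P' m k)).trace := by
    rw [hh'eq, Finset.mul_sum, trace_sum]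
    have key : ∀ a : Fin n,
        (P m k * P' l k * ((ε' a k : ℂ) • P a k + (ε a k : ℂ) • P' a k)).trace
        = (if a = l then (ε l k : ℂ) * (P m k * (P' l k * P' l k)).trace else 0)
          + (if a = m then -((ε m k : ℂ) * (P l k * (P' m k * P' m k)).trace) else 0) := by
      intro a
      rw [mul_add, trace_add, mul_smul_comm, mul_smul_comm, trace_smul, trace_smul,
        smul_eq_mul, smul_eq_mul, t2 a, mul_zero, zero_add]
      by_cases hal : a = l
      · subst hal
        rw [if_pos rfl, if_neg (fun hh : a = m => hml hh.symm), add_zero, ← mul_assoc]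
      · by_cases ham : a = m
        · subst ham
          rw [if_neg hal, if_pos rfl, zero_add, tF2, mul_neg]
        · rw [tF3 a ham hal, mul_zero, if_neg hal, if_neg ham, add_zero]
    rw [Finset.sum_congr rfl (fun a _ => key a), Finset.sum_add_distrib,
      Finset.sum_ite_eq' Finset.univ, Finset.sum_ite_eq' Finset.univ]
    simp
    ring
  calc (P m k * Fh' k * P l k * h' k).trace
      = ((((f (ε l k) : ℝ) : ℂ) - ((f (ε m k) : ℝ) : ℂ))
          • (P m k * P' l k * h' k)).trace := by rw [hA, smul_mul_assoc]
    _ = (((f (ε l k) : ℝ) : ℂ) - ((f (ε m k) : ℝ) : ℂ))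
          * (P m k * P' l k * h' k).trace := by rw [trace_smul, smul_eq_mul]
    _ = _ := by
        rw [hTr, hTS]
        ring
end

section
/- Let h : ℝ → M_n(ℂ) be a C¹ family of Hermitian matrices with nondegenerate C¹ eigenvalues εᵐ(k) and C¹ spectral projections Pᵐ(k), suppose there is C > 0 with |εᵐ(k) - εˡ(k)| > C for all m ≠ l and k in a compact interval B, and let f : ℝ → [0,1] be C¹. Then for λ > 0, | Re ∫_B Σ_{m≠l} (1/(2λ + i(εᵐ(k) - εˡ(k)))) Tr[Pᵐ(k) ∂(f(h(k))) Pˡ(k) ∂h(k)] dk | ≤ (4λ/C) Σ_{m≠l} ∫_B Tr[Pᵐ(k)(∂Pˡ(k))²] dk. -/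
open Matrix

lemma aux_re_mul (z : ℂ) (r : ℝ) : (z * (r : ℂ)).re = r * z.re := by
  rw [mul_comm, Complex.re_ofReal_mul]

lemma aux_trace_sq_real {n : ℕ} (Q R : Matrix (Fin n) (Fin n) ℂ)
    (hQ : Qᴴ = Q) (hQ2 : Q * Q = Q) (hR : Rᴴ = R) :
    (Q * (R * R)).trace = (((Q * (R * R)).trace.re : ℝ) : ℂ) ∧ 0 ≤ (Q * (R * R)).trace.re := by
  have key : (Q * (R * R)).trace = ((R * Q)ᴴ * (R * Q)).trace := by
    rw [conjTranspose_mul, hQ, hR]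
    rw [show Q * R * (R * Q) = (Q * (R * R)) * Q by noncomm_ring]
    rw [Matrix.trace_mul_comm (Q * (R * R)) Q, ← mul_assoc Q Q (R * R), hQ2]
  have key2 : ((R * Q)ᴴ * (R * Q)).trace
      = ((∑ i, ∑ j, Complex.normSq ((R * Q) j i) : ℝ) : ℂ) := by
    push_cast
    simp only [Matrix.trace, Matrix.diag, Matrix.mul_apply, Matrix.conjTranspose_apply]
    simp [Complex.normSq_eq_conj_mul_self, Complex.star_def]
  have h3 := key.trans key2
  constructor
  · rw [h3]; simp
  · rw [h3, Complex.ofReal_re]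
    exact Finset.sum_nonneg fun i _ => Finset.sum_nonneg fun j _ => Complex.normSq_nonneg _

lemma aux_offdiag {n : ℕ} (Q Q' : Fin n → Matrix (Fin n) (Fin n) ℂ)
    (hproj : ∀ m l, Q m * Q l = if m = l then Q m else 0)
    (hrel : ∀ m, Q' m = Q' m * Q m + Q m * Q' m)
    {m l j : Fin n} (hjm : j ≠ m) (hjl : j ≠ l) :
    Q m * Q' j * Q l = 0 := by
  calc Q m * Q' j * Q l = Q m * (Q' j * Q j + Q j * Q' j) * Q l := by rw [← hrel]
    _ = Q m * Q' j * (Q j * Q l) + Q m * Q j * (Q' j * Q l) := by noncomm_ring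
    _ = 0 := by rw [hproj j l, if_neg hjl, hproj m j, if_neg (Ne.symm hjm)]; simp

lemma aux_swap {n : ℕ} (Q Q' : Fin n → Matrix (Fin n) (Fin n) ℂ)
    (hproj : ∀ m l, Q m * Q l = if m = l then Q m else 0)
    (hsum' : ∑ m, Q' m = 0)
    (hrel : ∀ m, Q' m = Q' m * Q m + Q m * Q' m)
    {m l : Fin n} (hml : m ≠ l) :
    Q m * Q' m * Q l = -(Q m * Q' l * Q l) := by
  have h0 : ∑ j, Q m * Q' j * Q l = 0 := by
    rw [← Matrix.sum_mul, ← Matrix.mul_sum, hsum', mul_zero, zero_mul]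
  have h1 : ∑ j, Q m * Q' j * Q l = Q m * Q' m * Q l + Q m * Q' l * Q l := by
    rw [← Finset.sum_subset (Finset.subset_univ ({m, l} : Finset (Fin n)))
      (fun x _ hx => by
        have hx' : x ≠ m ∧ x ≠ l := by simpa using hx
        exact aux_offdiag Q Q' hproj hrel hx'.1 hx'.2),
      Finset.sum_pair hml]
  rw [h1] at h0
  exact eq_neg_of_add_eq_zero_left h0

lemma aux_sandwich {n : ℕ} (Q Q' : Fin n → Matrix (Fin n) (Fin n) ℂ)
    (hproj : ∀ m l, Q m * Q l = if m = l then Q m else 0)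
    (hsum' : ∑ m, Q' m = 0)
    (hrel : ∀ m, Q' m = Q' m * Q m + Q m * Q' m)
    (c d : Fin n → ℂ) {m l : Fin n} (hml : m ≠ l) :
    Q m * (∑ j, (c j • Q j + d j • Q' j)) * Q l = (d l - d m) • (Q m * Q' l * Q l) := by
  have hQQQ : ∀ j, Q m * Q j * Q l = 0 := by
    intro j
    by_cases hj : m = j
    · subst hj; rw [hproj m m, if_pos rfl, hproj m l, if_neg hml]
    · rw [hproj m j, if_neg hj, zero_mul]
  have hterm : ∀ j, Q m * (c j • Q j + d j • Q' j) * Q l = d j • (Q m * Q' j * Q l) := by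
    intro j
    simp only [Matrix.mul_add, Matrix.add_mul, Matrix.mul_smul, Matrix.smul_mul]
    rw [hQQQ j, smul_zero, zero_add]
  rw [Matrix.mul_sum, Matrix.sum_mul]
  simp_rw [hterm]
  rw [← Finset.sum_subset (Finset.subset_univ ({m, l} : Finset (Fin n)))
    (fun x _ hx => by
      have hx' : x ≠ m ∧ x ≠ l := by simpa using hx
      rw [aux_offdiag Q Q' hproj hrel hx'.1 hx'.2, smul_zero]),
    Finset.sum_pair hml]
  rw [aux_swap Q Q' hproj hsum' hrel hml, smul_neg, sub_smul]
  abel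

set_option maxHeartbeats 1000000 in
lemma aux_keytrace {n : ℕ} (Q Q' : Fin n → Matrix (Fin n) (Fin n) ℂ)
    (A B : Matrix (Fin n) (Fin n) ℂ)
    (hproj : ∀ m l, Q m * Q l = if m = l then Q m else 0)
    (hsum' : ∑ m, Q' m = 0)
    (hrel : ∀ m, Q' m = Q' m * Q m + Q m * Q' m)
    (cA dA cB dB : Fin n → ℂ)
    (hA : A = ∑ j, (cA j • Q j + dA j • Q' j))
    (hB : B = ∑ j, (cB j • Q j + dB j • Q' j))
    {m l : Fin n} (hml : m ≠ l) :
    (Q m * A * Q l * B).trace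
      = (dA l - dA m) * (dB l - dB m) * (Q m * (Q' l * Q' l)).trace := by
  have hsA : Q m * A * Q l = (dA l - dA m) • (Q m * Q' l * Q l) := by
    rw [hA]; exact aux_sandwich Q Q' hproj hsum' hrel cA dA hml
  have hsB : Q l * B * Q m = (dB m - dB l) • (Q l * Q' m * Q m) := by
    rw [hB]; exact aux_sandwich Q Q' hproj hsum' hrel cB dB hml.symm
  have hswap2 : Q l * Q' m * Q m = -(Q l * Q' l * Q m) := by
    have := aux_swap Q Q' hproj hsum' hrel hml.symm
    rw [this]; rw [neg_neg]
  have step1 : (Q m * A * Q l * B).trace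
      = (dA l - dA m) * ((Q l * B * Q m) * Q' l).trace := by
    rw [hsA, Matrix.smul_mul, Matrix.trace_smul, smul_eq_mul]
    congr 1
    rw [mul_assoc, Matrix.trace_mul_comm (Q m * Q' l) (Q l * B), ← mul_assoc]
  rw [step1, hsB, Matrix.smul_mul, Matrix.trace_smul, smul_eq_mul, hswap2]
  have step2 : ((-(Q l * Q' l * Q m)) * Q' l).trace = -(Q m * (Q' l * Q' l)).trace := by
    rw [Matrix.neg_mul, Matrix.trace_neg]
    congr 1
    have h' : Q' l * Q l = Q' l - Q l * Q' l := eq_sub_of_add_eq (hrel l).symm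
    have key : Q m * Q' l * (Q l * Q' l) = Q m * (Q' l * Q' l) := by
      calc Q m * Q' l * (Q l * Q' l) = Q m * (Q' l * Q l) * Q' l := by
            rw [← mul_assoc, mul_assoc (Q m) (Q' l) (Q l)]
        _ = Q m * (Q' l - Q l * Q' l) * Q' l := by rw [h']
        _ = Q m * (Q' l * Q' l) - Q m * Q l * (Q' l * Q' l) := by
            simp only [Matrix.mul_sub, Matrix.sub_mul, mul_assoc]
        _ = Q m * (Q' l * Q' l) := by rw [hproj m l, if_neg hml, zero_mul, sub_zero]
    rw [mul_assoc, Matrix.trace_mul_comm (Q l * Q' l) (Q m * Q' l), key]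
  rw [step2]
  ring

/-- The off-diagonal contribution to the conductivity is `O(λ)`: for a `C¹` family of
Hermitian matrices on a compact interval `B = [a,b]` with uniform spectral gap `C` and a
`C¹` function `f` with values in `[0,1]`,
`|Re ∫_B Σ_{m≠l} (2λ + i(εᵐ - εˡ))⁻¹ Tr[Pᵐ ∂(f(h)) Pˡ ∂h] dk|
  ≤ (4λ/C) Σ_{m≠l} ∫_B Tr[Pᵐ (∂Pˡ)²] dk`. -/
theorem stmt11 {n : ℕ} (h h' : ℝ → Matrix (Fin n) (Fin n) ℂ)
    (ε ε' : Fin n → ℝ → ℝ) (P P' : Fin n → ℝ → Matrix (Fin n) (Fin n) ℂ)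
    (f f' : ℝ → ℝ) (Fh' : ℝ → Matrix (Fin n) (Fin n) ℂ)
    (a b : ℝ) (hab : a ≤ b) (C lam : ℝ) (hC : 0 < C) (hlam : 0 < lam)
    (hherm : ∀ k, (h k).IsHermitian)
    (hspec : ∀ k, h k = ∑ m, (ε m k : ℂ) • P m k)
    (hproj : ∀ (k : ℝ) (m l : Fin n), P m k * P l k = if m = l then P m k else 0)
    (hadj : ∀ (k : ℝ) (m : Fin n), (P m k)ᴴ = P m k)
    (hsumP : ∀ k : ℝ, ∑ m, P m k = 1)
    (hgap : ∀ k ∈ Set.Icc a b, ∀ m l : Fin n, m ≠ l → C < |ε m k - ε l k|)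
    (hε : ∀ (m : Fin n) (k : ℝ), HasDerivAt (ε m) (ε' m k) k)
    (hεC1 : ∀ m : Fin n, Continuous (ε' m))
    (hPd : ∀ (m : Fin n) (k : ℝ) (i j : Fin n),
      HasDerivAt (fun k => P m k i j) (P' m k i j) k)
    (hPC1 : ∀ (m : Fin n) (i j : Fin n), Continuous fun k => P' m k i j)
    (hhd : ∀ (k : ℝ) (i j : Fin n), HasDerivAt (fun k => h k i j) (h' k i j) k)
    (hhC1 : ∀ i j : Fin n, Continuous fun k => h' k i j)
    (hf : ∀ x : ℝ, HasDerivAt f (f' x) x)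
    (hf01 : ∀ x : ℝ, f x ∈ Set.Icc (0 : ℝ) 1)
    (hFh : ∀ (k : ℝ) (i j : Fin n),
      HasDerivAt (fun k => (∑ m, (f (ε m k) : ℂ) • P m k) i j) (Fh' k i j) k) :
    |(∫ k in a..b, ∑ m, ∑ l, if m = l then 0 else
        (1 / (2 * (lam : ℂ) + Complex.I * ((ε m k : ℂ) - (ε l k : ℂ)))) *
          (P m k * Fh' k * P l k * h' k).trace).re|
      ≤ (4 * lam / C) * ∑ m, ∑ l, if m = l then 0 else
          ∫ k in a..b, ((P m k * (P' l k * P' l k)).trace).re := by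
  classical
  -- continuity facts
  have hPcont : ∀ m : Fin n, Continuous fun k => P m k := by
    intro m
    refine continuous_matrix fun i j => ?_
    have hd : Differentiable ℝ fun k => P m k i j := fun k => (hPd m k i j).differentiableAt
    exact hd.continuous
  have hP'cont : ∀ m : Fin n, Continuous fun k => P' m k :=
    fun m => continuous_matrix fun i j => hPC1 m i j
  have hεcont : ∀ m : Fin n, Continuous (ε m) := by
    intro m
    have hd : Differentiable ℝ (ε m) := fun k => (hε m k).differentiableAt
    exact hd.continuous
  have hfcont : Continuous f := by
    have hd : Differentiable ℝ f := fun x => (hf x).differentiableAt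
    exact hd.continuous
  -- sum of P' is zero
  have hP'sum : ∀ k : ℝ, ∑ m, P' m k = 0 := by
    intro k; ext i j
    have h1 : HasDerivAt (fun k => ∑ m, P m k i j) (∑ m, P' m k i j) k :=
      HasDerivAt.fun_sum fun m _ => hPd m k i j
    have h2 : (fun k => ∑ m, P m k i j) = fun _ => (1 : Matrix (Fin n) (Fin n) ℂ) i j := by
      funext k
      rw [← Matrix.sum_apply i j Finset.univ fun m => P m k, hsumP k]
    rw [h2] at h1
    have h3 := h1.unique (hasDerivAt_const k _)
    simpa [Matrix.sum_apply] using h3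
  -- Leibniz relation for projections
  have hrelP : ∀ (m : Fin n) (k : ℝ), P' m k = P' m k * P m k + P m k * P' m k := by
    intro m k; ext i j
    have h1 : HasDerivAt (fun k => ∑ x, P m k i x * P m k x j)
        (∑ x, (P' m k i x * P m k x j + P m k i x * P' m k x j)) k :=
      HasDerivAt.fun_sum fun x _ => (hPd m k i x).mul (hPd m k x j)
    have h2 : (fun k => ∑ x, P m k i x * P m k x j) = fun k => P m k i j := by
      funext k
      have h3 := congrArg (fun M => M i j) (hproj k m m)
      simpa [Matrix.mul_apply] using h3
    rw [h2] at h1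
    have h4 := (hPd m k i j).unique h1
    simp only [Matrix.add_apply, Matrix.mul_apply]
    rw [h4, Finset.sum_add_distrib]
  -- P' is hermitian
  have hP'adj : ∀ (m : Fin n) (k : ℝ), (P' m k)ᴴ = P' m k := by
    intro m k; ext i j
    have h1 : HasDerivAt (fun k => star (P m k j i)) (star (P' m k j i)) k :=
      (hPd m k j i).star
    have h2 : (fun k => star (P m k j i)) = fun k => P m k i j := by
      funext k
      have h3 := congrArg (fun M => M i j) (hadj k m)
      simpa [Matrix.conjTranspose_apply] using h3
    rw [h2] at h1
    have h4 := h1.unique (hPd m k i j)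
    simpa [Matrix.conjTranspose_apply] using h4
  -- identify h'
  have hh'eq : ∀ k : ℝ, h' k = ∑ j, ((ε' j k : ℂ) • P j k + (ε j k : ℂ) • P' j k) := by
    intro k; ext i j
    have h1 : HasDerivAt (fun k => ∑ x, (ε x k : ℂ) * P x k i j)
        (∑ x, ((ε' x k : ℂ) * P x k i j + (ε x k : ℂ) * P' x k i j)) k :=
      HasDerivAt.fun_sum fun x _ => ((hε x k).ofReal_comp).mul (hPd x k i j)
    have h2 : (fun k => ∑ x, (ε x k : ℂ) * P x k i j) = fun k => h k i j := by
      funext k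
      have h3 := congrArg (fun M => M i j) (hspec k)
      simpa [Matrix.sum_apply, Matrix.smul_apply, smul_eq_mul] using h3.symm
    rw [h2] at h1
    have h4 := (hhd k i j).unique h1
    simpa [Matrix.sum_apply, Matrix.add_apply, Matrix.smul_apply, smul_eq_mul] using h4
  -- identify Fh'
  have hFh'eq : ∀ k : ℝ, Fh' k
      = ∑ j, (((f' (ε j k) * ε' j k : ℝ) : ℂ) • P j k + ((f (ε j k) : ℝ) : ℂ) • P' j k) := by
    intro k; ext i j
    have h1 : HasDerivAt (fun k => ∑ x, (f (ε x k) : ℂ) * P x k i j)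
        (∑ x, (((f' (ε x k) * ε' x k : ℝ) : ℂ) * P x k i j + (f (ε x k) : ℂ) * P' x k i j)) k := by
      refine HasDerivAt.fun_sum fun x _ => ?_
      have hfε : HasDerivAt (fun k => f (ε x k)) (f' (ε x k) * ε' x k) k :=
        (hf (ε x k)).comp k (hε x k)
      exact (hfε.ofReal_comp).mul (hPd x k i j)
    have h2 : (fun k => ∑ x, (f (ε x k) : ℂ) * P x k i j)
        = fun k => (∑ m, (f (ε m k) : ℂ) • P m k) i j := by
      funext k
      simp [Matrix.sum_apply, Matrix.smul_apply, smul_eq_mul]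
    rw [h2] at h1
    have h4 := (hFh k i j).unique h1
    simpa [Matrix.sum_apply, Matrix.add_apply, Matrix.smul_apply, smul_eq_mul] using h4
  -- key trace identity
  have keytr : ∀ (k : ℝ) {m l : Fin n}, m ≠ l →
      (P m k * Fh' k * P l k * h' k).trace
        = (((f (ε l k) : ℝ) : ℂ) - ((f (ε m k) : ℝ) : ℂ))
            * (((ε l k : ℝ) : ℂ) - ((ε m k : ℝ) : ℂ))
            * (P m k * (P' l k * P' l k)).trace := by
    intro k m l hml
    have := aux_keytrace (fun m => P m k) (fun m => P' m k) (Fh' k) (h' k)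
      (hproj k) (hP'sum k) (fun m => hrelP m k)
      (fun j => ((f' (ε j k) * ε' j k : ℝ) : ℂ)) (fun j => ((f (ε j k) : ℝ) : ℂ))
      (fun j => ((ε' j k : ℝ) : ℂ)) (fun j => ((ε j k : ℝ) : ℂ))
      (hFh'eq k) (hh'eq k) hml
    simpa using this
  -- diagonal trace is real and nonnegative
  have htr : ∀ (k : ℝ) (m l : Fin n),
      (P m k * (P' l k * P' l k)).trace
        = (((P m k * (P' l k * P' l k)).trace.re : ℝ) : ℂ)
      ∧ 0 ≤ ((P m k * (P' l k * P' l k)).trace).re := by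
    intro k m l
    have hQ2 : P m k * P m k = P m k := by rw [hproj k m m, if_pos rfl]
    exact aux_trace_sq_real _ _ (hadj k m) hQ2 (hP'adj l k)
  -- the nice integrand
  set G : ℝ → ℂ := fun k => ∑ m, ∑ l, if m = l then 0 else
      (1 / (2 * (lam : ℂ) + Complex.I * ((ε m k : ℂ) - (ε l k : ℂ)))) *
        ((((f (ε l k) - f (ε m k)) * (ε l k - ε m k)
            * ((P m k * (P' l k * P' l k)).trace.re)) : ℝ) : ℂ) with hG
  have hFG : ∀ k : ℝ, (∑ m, ∑ l, if m = l then 0 else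
      (1 / (2 * (lam : ℂ) + Complex.I * ((ε m k : ℂ) - (ε l k : ℂ)))) *
        (P m k * Fh' k * P l k * h' k).trace) = G k := by
    intro k
    rw [hG]
    refine Finset.sum_congr rfl fun m _ => Finset.sum_congr rfl fun l _ => ?_
    by_cases hml : m = l
    · simp [hml]
    · rw [if_neg hml, if_neg hml, keytr k hml]
      conv_lhs => rw [(htr k m l).1]
      push_cast
      ring
  have hwre : ∀ (k : ℝ) (m l : Fin n),
      (1 / (2 * (lam : ℂ) + Complex.I * ((ε m k : ℂ) - (ε l k : ℂ)))).re
        = 2 * lam / (4 * lam ^ 2 + (ε m k - ε l k) ^ 2) := by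
    intro k m l
    have hre : (2 * (lam : ℂ) + Complex.I * ((ε m k : ℂ) - (ε l k : ℂ))).re = 2 * lam := by
      simp
    have him : (2 * (lam : ℂ) + Complex.I * ((ε m k : ℂ) - (ε l k : ℂ))).im
        = ε m k - ε l k := by
      simp
    rw [one_div, Complex.inv_re, Complex.normSq_apply, hre, him]
    ring
  have hGre : ∀ k : ℝ, (G k).re = ∑ m, ∑ l, if m = l then (0 : ℝ) else
      ((f (ε l k) - f (ε m k)) * (ε l k - ε m k) * ((P m k * (P' l k * P' l k)).trace.re))
        * (2 * lam / (4 * lam ^ 2 + (ε m k - ε l k) ^ 2)) := by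
    intro k
    rw [hG]
    rw [Complex.re_sum]
    refine Finset.sum_congr rfl fun m _ => ?_
    rw [Complex.re_sum]
    refine Finset.sum_congr rfl fun l _ => ?_
    by_cases hml : m = l
    · simp [hml]
    · rw [if_neg hml, if_neg hml, aux_re_mul, hwre k m l]
  -- pointwise bound
  have hbound : ∀ k ∈ Set.Icc a b, ∀ m l : Fin n, m ≠ l →
      |((f (ε l k) - f (ε m k)) * (ε l k - ε m k) * ((P m k * (P' l k * P' l k)).trace.re))
          * (2 * lam / (4 * lam ^ 2 + (ε m k - ε l k) ^ 2))|
        ≤ 4 * lam / C * ((P m k * (P' l k * P' l k)).trace.re) := by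
    intro k hk m l hml
    have hT0 : 0 ≤ ((P m k * (P' l k * P' l k)).trace.re) := (htr k m l).2
    have hdC : C < |ε m k - ε l k| := hgap k hk m l hml
    have hd0 : 0 < |ε m k - ε l k| := lt_trans hC hdC
    have hΔ : |f (ε l k) - f (ε m k)| ≤ 1 := by
      have h1 := hf01 (ε l k); have h2 := hf01 (ε m k)
      rw [Set.mem_Icc] at h1 h2
      exact abs_sub_le_iff.2 ⟨by linarith [h1.1, h1.2, h2.1, h2.2],
        by linarith [h1.1, h1.2, h2.1, h2.2]⟩
    have hD : (0 : ℝ) < 4 * lam ^ 2 + (ε m k - ε l k) ^ 2 := by positivity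
    rw [abs_mul, abs_mul, abs_mul]
    have he : |ε l k - ε m k| = |ε m k - ε l k| := abs_sub_comm _ _
    rw [he, abs_of_nonneg hT0,
      abs_of_pos (show (0 : ℝ) < 2 * lam / (4 * lam ^ 2 + (ε m k - ε l k) ^ 2) by positivity)]
    rw [show (4 : ℝ) * lam / C * ((P m k * (P' l k * P' l k)).trace.re)
        = (4 * lam * ((P m k * (P' l k * P' l k)).trace.re)) / C by ring,
      show |f (ε l k) - f (ε m k)| * |ε m k - ε l k| * ((P m k * (P' l k * P' l k)).trace.re)
          * (2 * lam / (4 * lam ^ 2 + (ε m k - ε l k) ^ 2))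
        = (|f (ε l k) - f (ε m k)| * |ε m k - ε l k| * ((P m k * (P' l k * P' l k)).trace.re)
            * (2 * lam)) / (4 * lam ^ 2 + (ε m k - ε l k) ^ 2) by ring,
      div_le_div_iff₀ hD hC]
    have hd2 : (ε m k - ε l k) ^ 2 = |ε m k - ε l k| ^ 2 := (sq_abs _).symm
    rw [hd2]
    nlinarith [mul_nonneg (mul_nonneg hd0.le hT0) (mul_nonneg (by linarith : (0:ℝ) ≤ 2 * lam) hC.le),
      mul_nonneg (mul_nonneg (sub_nonneg.2 hΔ) (mul_nonneg hd0.le hT0))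
        (mul_nonneg (by linarith : (0:ℝ) ≤ 2 * lam) hC.le),
      mul_nonneg (mul_nonneg (sub_nonneg.2 hdC.le) (mul_nonneg hd0.le hT0))
        (by linarith : (0:ℝ) ≤ 2 * lam),
      mul_nonneg (mul_nonneg hd0.le hd0.le) (mul_nonneg hT0 hlam.le),
      mul_nonneg (mul_nonneg hlam.le (mul_nonneg hlam.le hlam.le)) hT0]
  -- continuity of everything
  have hTcont : ∀ m l : Fin n, Continuous fun k => ((P m k * (P' l k * P' l k)).trace).re :=
    fun m l => Complex.continuous_re.comp
      (Continuous.matrix_trace ((hPcont m).matrix_mul ((hP'cont l).matrix_mul (hP'cont l))))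
  have hwne : ∀ (k : ℝ) (m l : Fin n),
      (2 * (lam : ℂ) + Complex.I * ((ε m k : ℂ) - (ε l k : ℂ))) ≠ 0 := by
    intro k m l hzero
    have h1 := congrArg Complex.re hzero
    simp at h1
    linarith
  have hwcont : ∀ m l : Fin n, Continuous fun k =>
      (2 * (lam : ℂ) + Complex.I * ((ε m k : ℂ) - (ε l k : ℂ))) :=
    fun m l => continuous_const.add (continuous_const.mul
      ((Complex.continuous_ofReal.comp (hεcont m)).sub
        (Complex.continuous_ofReal.comp (hεcont l))))
  have hGcont : Continuous G := by
    rw [hG]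
    refine continuous_finset_sum _ fun m _ => continuous_finset_sum _ fun l _ => ?_
    by_cases hml : m = l
    · simp only [if_pos hml]; exact continuous_const
    · simp only [if_neg hml]
      refine Continuous.mul ?_ ?_
      · exact continuous_const.div (hwcont m l) fun k => hwne k m l
      · refine Complex.continuous_ofReal.comp ?_
        exact (((hfcont.comp (hεcont l)).sub (hfcont.comp (hεcont m))).mul
          ((hεcont l).sub (hεcont m))).mul (hTcont m l)
  have hGrecont : Continuous fun k => (G k).re := Complex.continuous_re.comp hGcont
  have hBtermcont : ∀ m l : Fin n, Continuous fun k =>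
      (if m = l then (0 : ℝ) else 4 * lam / C * ((P m k * (P' l k * P' l k)).trace).re) := by
    intro m l
    by_cases hml : m = l
    · simp only [if_pos hml]; exact continuous_const
    · simp only [if_neg hml]; exact continuous_const.mul (hTcont m l)
  have hBndcont : Continuous fun k => ∑ m, ∑ l,
      (if m = l then (0 : ℝ) else 4 * lam / C * ((P m k * (P' l k * P' l k)).trace).re) :=
    continuous_finset_sum _ fun m _ => continuous_finset_sum _ fun l _ => hBtermcont m l
  -- bound on (G k).re on Icc
  have hGbound : ∀ k ∈ Set.Icc a b, |(G k).re| ≤ ∑ m, ∑ l,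
      (if m = l then (0 : ℝ) else 4 * lam / C * ((P m k * (P' l k * P' l k)).trace).re) := by
    intro k hk
    rw [hGre k]
    refine le_trans (Finset.abs_sum_le_sum_abs _ _) (Finset.sum_le_sum fun m _ => ?_)
    refine le_trans (Finset.abs_sum_le_sum_abs _ _) (Finset.sum_le_sum fun l _ => ?_)
    by_cases hml : m = l
    · simp [hml]
    · rw [if_neg hml, if_neg hml]
      exact hbound k hk m l hml
  -- replace the integrand
  have h5 : (∫ k in a..b, ∑ m, ∑ l, if m = l then 0 else
        (1 / (2 * (lam : ℂ) + Complex.I * ((ε m k : ℂ) - (ε l k : ℂ)))) *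
          (P m k * Fh' k * P l k * h' k).trace) = ∫ k in a..b, G k :=
    intervalIntegral.integral_congr fun k _ => hFG k
  rw [h5]
  have h6 : (∫ k in a..b, G k).re = ∫ k in a..b, (G k).re := by
    have hGint : IntervalIntegrable G MeasureTheory.volume a b := hGcont.intervalIntegrable a b
    have h7 := Complex.reCLM.intervalIntegral_comp_comm hGint
    simpa using h7.symm
  rw [h6]
  have h8 : |∫ k in a..b, (G k).re| ≤ ∫ k in a..b, ∑ m, ∑ l,
      (if m = l then (0 : ℝ) else 4 * lam / C * ((P m k * (P' l k * P' l k)).trace).re) := by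
    refine le_trans ?_ (intervalIntegral.integral_mono_on hab
      ((continuous_abs.comp hGrecont).intervalIntegrable a b)
      (hBndcont.intervalIntegrable a b) hGbound)
    simpa [Real.norm_eq_abs] using
      intervalIntegral.norm_integral_le_integral_norm (f := fun k => (G k).re) hab
  refine le_trans h8 ?_
  rw [intervalIntegral.integral_finset_sum fun m _ =>
    (continuous_finset_sum _ fun l _ => hBtermcont m l).intervalIntegrable a b]
  rw [Finset.mul_sum]
  refine le_of_eq (Finset.sum_congr rfl fun m _ => ?_)
  rw [intervalIntegral.integral_finset_sum fun l _ => (hBtermcont m l).intervalIntegrable a b]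
  rw [Finset.mul_sum]
  refine Finset.sum_congr rfl fun l _ => ?_
  by_cases hml : m = l
  · simp [hml]
  · simp only [if_neg hml]
    rw [intervalIntegral.integral_const_mul]
end

section
/- Let ε : [-π/p, π/p] → ℝ be a C² even function (ε(-k) = ε(k)) which is strictly monotone increasing on [0, π/p], and let μ ∈ (ε(0), ε(π/p)). Let f_β(x) = 1/(1 + e^{β(x-μ)}). Then lim_{β→∞} ∫_{-π/p}^{π/p} f_β(ε(k)) ε''(k) dk = ∫_{{k : ε(k) ≤ μ}} ε''(k) dk = 2 ε'(k_μ), where k_μ ∈ (0, π/p) is the unique solution of ε(k_μ) = μ. -/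
open MeasureTheory Filter
open scoped Real Topology

/-- Low-temperature limit for a one-dimensional band: if `ε` is a `C²` even dispersion,
strictly increasing on `[0, π/p]`, and `μ ∈ (ε(0), ε(π/p))` with Fermi point `k_μ`, then
`lim_{β→∞} ∫_{-π/p}^{π/p} f_β(ε(k)) ε''(k) dk = ∫_{{ε ≤ μ}} ε''(k) dk = 2 ε'(k_μ)`. -/
theorem stmt12 (p : ℝ) (hp : 0 < p) (ε : ℝ → ℝ) (hε : ContDiff ℝ 2 ε)
    (heven : ∀ k, ε (-k) = ε k)
    (hmono : StrictMonoOn ε (Set.Icc 0 (π / p)))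
    (μ : ℝ) (hμ : μ ∈ Set.Ioo (ε 0) (ε (π / p)))
    (kμ : ℝ) (hkμ : kμ ∈ Set.Ioo 0 (π / p)) (hkμF : ε kμ = μ) :
    Filter.Tendsto
      (fun β : ℝ => ∫ k in (-(π / p))..(π / p),
        (1 / (1 + Real.exp (β * (ε k - μ)))) * deriv (deriv ε) k)
      Filter.atTop
      (nhds (∫ k in {k | k ∈ Set.Icc (-(π / p)) (π / p) ∧ ε k ≤ μ}, deriv (deriv ε) k)) ∧
    (∫ k in {k | k ∈ Set.Icc (-(π / p)) (π / p) ∧ ε k ≤ μ}, deriv (deriv ε) k)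
      = 2 * deriv ε kμ := by
  
  have hL : 0 < π / p := div_pos Real.pi_pos hp
  obtain ⟨hk0, hkL⟩ := hkμ
  -- regularity
  have h2 : ContDiff ℝ ((1:ℕ)+1) ε := by exact_mod_cast hε
  have hd1 : ContDiff ℝ ((0:ℕ)+1) (deriv ε) := by
    exact_mod_cast (contDiff_succ_iff_deriv.mp h2).2.2
  have hdd_cont : Continuous (deriv (deriv ε)) := (contDiff_succ_iff_deriv.mp hd1).2.2.continuous
  have hd_diff : Differentiable ℝ (deriv ε) := hd1.differentiable (by simp)
  -- deriv ε is odd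
  have hodd : ∀ k, deriv ε (-k) = - deriv ε k := by
    intro k
    have h : deriv (fun y => ε (-y)) k = deriv ε k := by
      congr 1; funext y; rw [heven]
    rw [deriv_comp_neg] at h
    linarith
  have habs : ∀ k : ℝ, ε |k| = ε k := by
    intro k
    rcases abs_cases k with ⟨h, _⟩ | ⟨h, _⟩
    · rw [h]
    · rw [h, heven]
  -- set equality
  have hset : {k | k ∈ Set.Icc (-(π / p)) (π / p) ∧ ε k ≤ μ} = Set.Icc (-kμ) kμ := by
    ext k
    simp only [Set.mem_setOf_eq, Set.mem_Icc]
    constructor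
    · rintro ⟨⟨h1, h2'⟩, h3⟩
      refine abs_le.mp ?_
      by_contra hcon
      push_neg at hcon
      have h4 : ε kμ < ε |k| :=
        hmono ⟨hk0.le, hkL.le⟩ ⟨abs_nonneg k, abs_le.mpr ⟨h1, h2'⟩⟩ hcon
      rw [habs, hkμF] at h4; linarith
    · rintro ⟨h1, h2'⟩
      have hkabs : |k| ≤ kμ := abs_le.mpr ⟨h1, h2'⟩
      refine ⟨⟨by linarith, by linarith⟩, ?_⟩
      rw [← habs, ← hkμF]
      exact hmono.monotoneOn ⟨abs_nonneg k, by linarith⟩ ⟨hk0.le, hkL.le⟩ hkabs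
  have hset' : Set.Ioc (-(π / p)) (π / p) ∩ {k | ε k ≤ μ} = Set.Icc (-kμ) kμ := by
    ext k
    constructor
    · rintro ⟨hk, he⟩
      have h' : k ∈ {k | k ∈ Set.Icc (-(π / p)) (π / p) ∧ ε k ≤ μ} :=
        ⟨Set.Ioc_subset_Icc_self hk, he⟩
      rwa [hset] at h'
    · intro hk
      have h' : k ∈ {k | k ∈ Set.Icc (-(π / p)) (π / p) ∧ ε k ≤ μ} := by
        rw [hset]; exact hk
      obtain ⟨hk1, hk2⟩ := hk
      exact ⟨⟨by linarith, h'.1.2⟩, h'.2⟩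
  -- value of the Fermi-sea integral
  have hval : (∫ k in Set.Icc (-kμ) kμ, deriv (deriv ε) k) = 2 * deriv ε kμ := by
    rw [MeasureTheory.integral_Icc_eq_integral_Ioc,
      ← intervalIntegral.integral_of_le (by linarith : -kμ ≤ kμ),
      intervalIntegral.integral_deriv_eq_sub (fun x _ => hd_diff x)
        (hdd_cont.intervalIntegrable _ _), hodd]
    ring
  have hmeasset : MeasurableSet {k : ℝ | ε k ≤ μ} :=
    measurableSet_le hε.continuous.measurable measurable_const
  have hle : -(π / p) ≤ π / p := by linarith
  constructor
  · rw [hset, ← hset', ← MeasureTheory.setIntegral_indicator hmeasset]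
    simp only [intervalIntegral.integral_of_le hle]
    apply MeasureTheory.tendsto_integral_filter_of_dominated_convergence
      (bound := fun k => |deriv (deriv ε) k|)
    · refine Filter.Eventually.of_forall fun β => Continuous.aestronglyMeasurable ?_
      refine Continuous.mul ?_ hdd_cont
      refine Continuous.div continuous_const
        (continuous_const.add ((continuous_const.mul (hε.continuous.sub continuous_const)).rexp))
        fun x => ?_
      positivity
    · refine Filter.Eventually.of_forall fun β => Filter.Eventually.of_forall fun k => ?_
      have he : 0 ≤ Real.exp (β * (ε k - μ)) := (Real.exp_pos _).le
      have hf : |1 / (1 + Real.exp (β * (ε k - μ)))| ≤ 1 := by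
        rw [abs_of_nonneg (by positivity)]
        rw [div_le_one (by positivity)]
        linarith
      calc ‖1 / (1 + Real.exp (β * (ε k - μ))) * deriv (deriv ε) k‖
          = |1 / (1 + Real.exp (β * (ε k - μ)))| * |deriv (deriv ε) k| := abs_mul _ _
        _ ≤ 1 * |deriv (deriv ε) k| := by
            exact mul_le_mul_of_nonneg_right hf (abs_nonneg _)
        _ = |deriv (deriv ε) k| := one_mul _
    · exact (hdd_cont.abs.integrableOn_Ioc)
    · have hnull : ∀ᵐ k : ℝ, k ∉ ({kμ, -kμ} : Set ℝ) :=
        MeasureTheory.measure_eq_zero_iff_ae_notMem.mp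
          ((Set.toFinite ({kμ, -kμ} : Set ℝ)).measure_zero _)
      filter_upwards [MeasureTheory.ae_restrict_mem measurableSet_Ioc,
        MeasureTheory.ae_restrict_of_ae hnull] with k hk hknot
      have hne : ε k ≠ μ := by
        intro heq
        have h1 : |k| = kμ := hmono.injOn ⟨abs_nonneg k, abs_le.mpr ⟨hk.1.le, hk.2⟩⟩
          ⟨hk0.le, hkL.le⟩ (by rw [habs, heq, hkμF])
        rcases (abs_eq hk0.le).mp h1 with h | h
        · exact hknot (Or.inl h)
        · exact hknot (Or.inr (by simp [h]))
      rcases lt_or_gt_of_ne hne with hlt | hgt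
      · have hmem : k ∈ {k | ε k ≤ μ} := hlt.le
        rw [Set.indicator_of_mem hmem]
        have h1 : Tendsto (fun β : ℝ => β * (ε k - μ)) atTop atBot :=
          Tendsto.atTop_mul_const_of_neg (by linarith) tendsto_id
        have h2 : Tendsto (fun β : ℝ => Real.exp (β * (ε k - μ))) atTop (𝓝 0) :=
          Real.tendsto_exp_atBot.comp h1
        have h3 : Tendsto (fun β : ℝ => 1 / (1 + Real.exp (β * (ε k - μ)))) atTop
            (𝓝 (1 / (1 + 0))) :=
          tendsto_const_nhds.div (tendsto_const_nhds.add h2) (by norm_num)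
        simpa using h3.mul_const (deriv (deriv ε) k)
      · have hmem : k ∉ {k | ε k ≤ μ} := not_le.mpr hgt
        rw [Set.indicator_of_notMem hmem]
        have h1 : Tendsto (fun β : ℝ => β * (ε k - μ)) atTop atTop :=
          Tendsto.atTop_mul_const (by linarith) tendsto_id
        have h2 : Tendsto (fun β : ℝ => 1 + Real.exp (β * (ε k - μ))) atTop atTop :=
          tendsto_atTop_add_const_left _ 1 (Real.tendsto_exp_atTop.comp h1)
        have h3 : Tendsto (fun β : ℝ => 1 / (1 + Real.exp (β * (ε k - μ)))) atTop (𝓝 0) := by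
          simp only [one_div]; exact h2.inv_tendsto_atTop
        simpa using h3.mul_const (deriv (deriv ε) k)
  · rw [hset]; exact hval
end
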